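/- For 0 < σ < 1 < θ, 0 < ρ < ∞, and any n ≥ 2 and 0 < h ≤ (n+1)^{-θ}, the first-order difference over the n-th right block satisfies ∫_{a_{n,θ}+3n^{-θ}}^{a_{n,θ}+4n^{-θ}} |w_{σ,θ}(ξ+h) − w_{σ,θ}(ξ)|^ρ dξ = h^{σρ+1}/(σρ+1). -/

import Mathlib

open MeasureTheory Real Set

noncomputable def zetaR (θ : ℝ) : ℝ := ∑' n : ℕ, ((n : ℝ) + 1) ^ (-θ)

noncomputable def aSeq (θ : ℝ) (n : ℕ) : ℝ :=
  4 * ∑ j ∈ Finset.Icc 1 (n - 1), (j : ℝ) ^ (-θ)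

noncomputable def wPiece (σ θ : ℝ) (n : ℕ) (ξ : ℝ) : ℝ :=
  if ξ < aSeq θ n + (n : ℝ) ^ (-θ) then (ξ - aSeq θ n) ^ σ
  else if ξ < aSeq θ n + 2 * (n : ℝ) ^ (-θ) then (n : ℝ) ^ (-(θ * σ))
  else if ξ < aSeq θ n + 3 * (n : ℝ) ^ (-θ) then (aSeq θ n + 3 * (n : ℝ) ^ (-θ) - ξ) ^ σ
  else 0

open Classical in
noncomputable def wFn (σ θ : ℝ) (ξ : ℝ) : ℝ :=
  if h : ∃ n : ℕ, 2 ≤ n ∧ aSeq θ n ≤ ξ ∧ ξ < aSeq θ (n + 1) then wPiece σ θ h.choose ξ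
  else 0

lemma aSeq_succ (θ : ℝ) (n : ℕ) (hn : 1 ≤ n) :
    aSeq θ (n + 1) = aSeq θ n + 4 * (n : ℝ) ^ (-θ) := by
  unfold aSeq
  have h1 : n + 1 - 1 = (n - 1) + 1 := by omega
  rw [h1, Finset.sum_Icc_succ_top (by omega : 1 ≤ n - 1 + 1)]
  have h2 : (n - 1 + 1 : ℕ) = n := by omega
  rw [h2]; ring

lemma aSeq_mono (θ : ℝ) : Monotone (aSeq θ) := by
  intro m n hmn
  unfold aSeq
  have hsub : Finset.Icc 1 (m - 1) ⊆ Finset.Icc 1 (n - 1) :=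
    Finset.Icc_subset_Icc_right (by omega)
  have := Finset.sum_le_sum_of_subset_of_nonneg hsub
    (fun j _ _ => Real.rpow_nonneg (Nat.cast_nonneg j) (-θ))
  linarith

lemma wFn_eq (σ θ : ℝ) {n : ℕ} (hn : 2 ≤ n) {ξ : ℝ}
    (h1 : aSeq θ n ≤ ξ) (h2 : ξ < aSeq θ (n + 1)) :
    wFn σ θ ξ = wPiece σ θ n ξ := by
  have hex : ∃ m : ℕ, 2 ≤ m ∧ aSeq θ m ≤ ξ ∧ ξ < aSeq θ (m + 1) := ⟨n, hn, h1, h2⟩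
  rw [wFn, dif_pos hex]
  obtain ⟨hm0, hm1, hm2⟩ := hex.choose_spec
  congr 1
  by_contra hne
  rcases lt_or_gt_of_ne hne with hlt | hlt
  · exact absurd ((aSeq_mono θ (by omega : hex.choose + 1 ≤ n)).trans h1) (not_le.2 hm2)
  · exact absurd ((aSeq_mono θ (by omega : n + 1 ≤ hex.choose)).trans hm1) (not_le.2 h2)

lemma wPiece_eq_zero (σ θ : ℝ) (n : ℕ) {ξ : ℝ} (ht : 0 ≤ (n : ℝ) ^ (-θ))
    (h : aSeq θ n + 3 * (n : ℝ) ^ (-θ) ≤ ξ) : wPiece σ θ n ξ = 0 := by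
  unfold wPiece
  rw [if_neg (by linarith), if_neg (by linarith), if_neg (by linarith)]

/-- For 0 < σ < 1 < θ, 0 < ρ < ∞, n ≥ 2 and 0 < h ≤ (n+1)^{-θ}:
∫_{a_{n,θ}+3n^{-θ}}^{a_{n,θ}+4n^{-θ}} |w_{σ,θ}(ξ+h) − w_{σ,θ}(ξ)|^ρ dξ = h^{σρ+1}/(σρ+1). -/
theorem stmt10 (σ θ ρ : ℝ) (hσ0 : 0 < σ) (hσ1 : σ < 1) (hθ : 1 < θ) (hρ : 0 < ρ) :
    ∀ n : ℕ, 2 ≤ n → ∀ h : ℝ, 0 < h → h ≤ ((n : ℝ) + 1) ^ (-θ) →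
      (∫ ξ in (aSeq θ n + 3 * (n : ℝ) ^ (-θ))..(aSeq θ n + 4 * (n : ℝ) ^ (-θ)),
          |wFn σ θ (ξ + h) - wFn σ θ ξ| ^ ρ) = h ^ (σ * ρ + 1) / (σ * ρ + 1) := by
  intro n hn h hh0 hh1
  have hρσ : 0 < σ * ρ := mul_pos hσ0 hρ
  have hnpos : (0 : ℝ) < n := by exact_mod_cast (by omega : 0 < n)
  have ht0 : (0 : ℝ) < (n : ℝ) ^ (-θ) := Real.rpow_pos_of_pos hnpos _
  have ht1 : (0 : ℝ) < ((n : ℝ) + 1) ^ (-θ) := Real.rpow_pos_of_pos (by linarith) _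
  have htle : ((n : ℝ) + 1) ^ (-θ) ≤ (n : ℝ) ^ (-θ) :=
    Real.rpow_le_rpow_of_nonpos hnpos (by linarith) (by linarith)
  set A : ℝ := aSeq θ n with hA
  set t : ℝ := (n : ℝ) ^ (-θ) with ht
  have hB : aSeq θ (n + 1) = A + 4 * t := aSeq_succ θ n (by omega)
  have hB2 : aSeq θ (n + 2) = A + 4 * t + 4 * ((n : ℝ) + 1) ^ (-θ) := by
    have := aSeq_succ θ (n + 1) (by omega)
    rw [this, hB]; push_cast; ring
  set c : ℝ := A + 4 * t - h with hc
  set g : ℝ → ℝ := fun ξ => max (ξ - c) 0 ^ (σ * ρ) with hg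
  have hhle : h ≤ t := hh1.trans htle
  have hcge : A + 3 * t ≤ c := by rw [hc]; linarith
  have hae : ∀ᵐ ξ ∂(volume : Measure ℝ), ξ ∈ Set.uIoc (A + 3 * t) (A + 4 * t) →
      |wFn σ θ (ξ + h) - wFn σ θ ξ| ^ ρ = g ξ := by
    have h1 : ∀ᵐ ξ : ℝ, ξ ≠ A + 4 * t := by
      filter_upwards [MeasureTheory.compl_mem_ae_iff.mpr
        (measure_singleton (A + 4 * t))] with ξ hξ
      simpa using hξ
    have h2 : ∀ᵐ ξ : ℝ, ξ ≠ c := by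
      filter_upwards [MeasureTheory.compl_mem_ae_iff.mpr (measure_singleton c)] with ξ hξ
      simpa using hξ
    filter_upwards [h1, h2] with ξ hne1 hne2 hmem
    rw [Set.uIoc_of_le (by linarith : A + 3 * t ≤ A + 4 * t)] at hmem
    obtain ⟨hlo, hhi⟩ := hmem
    have hhi' : ξ < A + 4 * t := lt_of_le_of_ne hhi hne1
    have hwξ : wFn σ θ ξ = 0 := by
      rw [wFn_eq σ θ hn (by rw [← hA]; linarith) (by rw [hB]; linarith)]
      exact wPiece_eq_zero σ θ n ht0.le (by rw [← hA, ← ht]; linarith)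
    rcases lt_or_gt_of_ne hne2 with hlt | hgt
    · -- ξ < c : everything is zero
      have hwξh : wFn σ θ (ξ + h) = 0 := by
        rw [wFn_eq σ θ hn (by rw [← hA]; linarith) (by rw [hB]; linarith)]
        exact wPiece_eq_zero σ θ n ht0.le (by rw [← hA, ← ht]; linarith)
      rw [hwξ, hwξh]
      simp only [hg, sub_zero, abs_zero]
      rw [Real.zero_rpow hρ.ne', max_eq_right (by linarith), Real.zero_rpow hρσ.ne']
    · -- c < ξ
      have hwξh : wFn σ θ (ξ + h) = (ξ - c) ^ σ := by
        rw [wFn_eq σ θ (by omega : 2 ≤ n + 1)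
          (by rw [hB]; linarith) (by rw [hB2]; linarith)]
        unfold wPiece
        rw [if_pos (by rw [hB]; push_cast; linarith), hB]
        ring_nf
        rw [hc]; congr 1; ring
      rw [hwξ, hwξh, sub_zero, abs_of_nonneg (Real.rpow_nonneg (by linarith) σ)]
      simp only [hg]
      rw [max_eq_left (by linarith : (0:ℝ) ≤ ξ - c),
        Real.rpow_mul (by linarith : (0:ℝ) ≤ ξ - c)]
  rw [intervalIntegral.integral_congr_ae hae]
  have hgcont : Continuous g := by
    apply Continuous.rpow_const (by continuity)
    exact fun x => Or.inr hρσ.le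
  rw [← intervalIntegral.integral_add_adjacent_intervals (b := c)
    (hgcont.intervalIntegrable _ _) (hgcont.intervalIntegrable _ _)]
  have hzero : (∫ ξ in (A + 3 * t)..c, g ξ) = 0 := by
    rw [intervalIntegral.integral_congr (g := fun _ => (0 : ℝ))
      (fun ξ hξ => by
        rw [Set.uIcc_of_le hcge] at hξ
        simp only [hg]
        rw [max_eq_right (by linarith [hξ.2]), Real.zero_rpow hρσ.ne'])]
    simp
  have hmain : (∫ ξ in c..(A + 4 * t), g ξ) = h ^ (σ * ρ + 1) / (σ * ρ + 1) := by
    rw [intervalIntegral.integral_congr (g := fun ξ => (ξ - c) ^ (σ * ρ))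
      (fun ξ hξ => by
        rw [Set.uIcc_of_le (by linarith : c ≤ A + 4 * t)] at hξ
        simp only [hg]
        rw [max_eq_left (by linarith [hξ.1])])]
    rw [intervalIntegral.integral_comp_sub_right (fun x => x ^ (σ * ρ)) c]
    have e1 : c - c = 0 := by ring
    have e2 : A + 4 * t - c = h := by rw [hc]; ring
    rw [e1, e2, integral_rpow (Or.inl (by linarith : (-1:ℝ) < σ * ρ))]
    rw [Real.zero_rpow (by linarith : σ * ρ + 1 ≠ 0)]
    ring
  rw [hzero, hmain, zero_add]
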